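/- Let t ↦ (x_t, y_t) be the unique solution of the ODE ż = B(z) on its maximal forward interval [0, 𝒯) with (x∘, y∘) ∈ S, suppose 𝒯 < ∞, and let x_- = min{x∘, x_∞} and ť = sup{ t < 𝒯 : x_t ≥ x_- /2 }. Then the derivative of t ↦ y_t is strictly positive on (ť, 𝒯); i.e., y is strictly increasing there. -/

import Mathlib

open Real Set Filter Topology

/-- The optimal-velocity function `V(x) = tanh(x-2) - tanh(-2)`. -/
noncomputable def V (x : ℝ) : ℝ := Real.tanh (x - 2) - Real.tanh (-2)

/-- Inverse hyperbolic tangent. -/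
noncomputable def artanh (v : ℝ) : ℝ := (1 / 2) * Real.log ((1 + v) / (1 - v))

/-- The equilibrium following distance `x_∞ = d (2 + artanh(v∘ + tanh(-2)))`. -/
noncomputable def xInf (d v₀ : ℝ) : ℝ := d * (2 + _root_.artanh (v₀ + Real.tanh (-2)))

/-- `IsSol α β d v₀ x y T` says that `t ↦ (x t, y t)` solves the ODE `ż = B(z)` on the
forward time interval `[0, T)`, staying in the state space `S = (0,∞) × ℝ`. -/
def IsSol (α β d v₀ : ℝ) (x y : ℝ → ℝ) (T : EReal) : Prop :=
  ∀ t : ℝ, 0 ≤ t → (t : EReal) < T →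
    0 < x t ∧ HasDerivAt x (y t) t ∧
      HasDerivAt y (-α * (V (x t / d) - v₀ + y t) - β * y t / (x t) ^ 2) t

/-- `[0, T)` is the maximal forward interval of definition. -/
def IsMaximal (α β d v₀ : ℝ) (x y : ℝ → ℝ) (T : EReal) : Prop :=
  ∀ (T' : EReal) (x' y' : ℝ → ℝ), T < T' → IsSol α β d v₀ x' y' T' →
    x' 0 = x 0 → y' 0 = y 0 → False


set_option maxHeartbeats 2000000
section AuxVSI


lemma tanh_eq' (x : ℝ) : Real.tanh x = (Real.exp (2*x) - 1) / (Real.exp (2*x) + 1) := by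
  rw [Real.tanh_eq_sinh_div_cosh, Real.sinh_eq, Real.cosh_eq]
  have h1 : Real.exp x ≠ 0 := (Real.exp_pos x).ne'
  have h2 : Real.exp (2*x) = Real.exp x * Real.exp x := by
    rw [two_mul, Real.exp_add]
  have h3 : Real.exp (-x) = (Real.exp x)⁻¹ := by rw [Real.exp_neg]
  have h4 : Real.exp x * Real.exp x + 1 > 0 := by positivity
  rw [h2, h3]
  field_simp

lemma tanh_strictMono : StrictMono Real.tanh := by
  intro a b hab
  rw [tanh_eq', tanh_eq']
  have ha : (0:ℝ) < Real.exp (2*a) := Real.exp_pos _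
  have hb : (0:ℝ) < Real.exp (2*b) := Real.exp_pos _
  have h : Real.exp (2*a) < Real.exp (2*b) := Real.exp_lt_exp.2 (by linarith)
  rw [div_lt_div_iff₀ (by linarith) (by linarith)]
  nlinarith

lemma tanh_lt_one' (x : ℝ) : Real.tanh x < 1 := by
  rw [tanh_eq']
  have : (0:ℝ) < Real.exp (2*x) := Real.exp_pos _
  rw [div_lt_one (by linarith)]; linarith

lemma neg_one_lt_tanh (x : ℝ) : -1 < Real.tanh x := by
  rw [tanh_eq']
  have : (0:ℝ) < Real.exp (2*x) := Real.exp_pos _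
  rw [lt_div_iff₀ (by linarith)]; linarith

lemma tanh_artanh' {v : ℝ} (h1 : -1 < v) (h2 : v < 1) : Real.tanh (_root_.artanh v) = v := by
  have hpos : (0:ℝ) < (1 + v) / (1 - v) := by
    apply div_pos <;> linarith
  have : Real.exp (2 * _root_.artanh v) = (1 + v) / (1 - v) := by
    rw [_root_.artanh]
    rw [show 2 * ((1:ℝ)/2 * Real.log ((1+v)/(1-v))) = Real.log ((1+v)/(1-v)) by ring]
    exact Real.exp_log hpos
  rw [tanh_eq', this]
  have h1v : (1:ℝ) - v ≠ 0 := by linarith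
  field_simp
  ring

lemma hasDerivAt_tanh (x : ℝ) : HasDerivAt Real.tanh (1 / Real.cosh x ^ 2) x := by
  have hc : Real.cosh x ≠ 0 := (Real.cosh_pos x).ne'
  have h := (Real.hasDerivAt_sinh x).div (Real.hasDerivAt_cosh x) hc
  have heq : (Real.sinh / Real.cosh) = Real.tanh := by
    funext y; rw [Real.tanh_eq_sinh_div_cosh]; rfl
  rw [heq] at h
  have := Real.cosh_sq_sub_sinh_sq x
  rw [show Real.cosh x * Real.cosh x - Real.sinh x * Real.sinh x = 1 by
    nlinarith [Real.cosh_sq_sub_sinh_sq x]] at h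
  exact h

lemma tanh_lipschitz : LipschitzWith 1 Real.tanh := by
  rw [← lipschitzOnWith_univ]
  apply Convex.lipschitzOnWith_of_nnnorm_hasDerivWithin_le (f' := fun x => 1 / Real.cosh x ^ 2) convex_univ
    (fun x _ => (hasDerivAt_tanh x).hasDerivWithinAt)
  intro x _
  have h1 : (1:ℝ) ≤ Real.cosh x := Real.one_le_cosh x
  have h2 : (cosh x ^ 2)⁻¹ ≤ (1:ℝ) := by
    rw [inv_le_one_iff₀]; right; nlinarith
  simpa [← NNReal.coe_le_coe, Real.norm_eq_abs, abs_of_nonneg (by positivity : (0:ℝ) ≤ (Real.cosh x ^ 2)⁻¹)] using h2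



lemma tanh_dist (s t : ℝ) : |Real.tanh s - Real.tanh t| ≤ |s - t| := by
  have := tanh_lipschitz.dist_le_mul s t
  simpa [Real.dist_eq] using this

lemma abs_tanh_le_one (x : ℝ) : |Real.tanh x| ≤ 1 :=
  abs_le.2 ⟨(_root_.neg_one_lt_tanh x).le, (tanh_lt_one' x).le⟩

noncomputable def Bv (α β d v₀ : ℝ) : ℝ × ℝ → ℝ × ℝ :=
  fun p => (p.2, -α * (V (p.1 / d) - v₀ + p.2) - β * p.2 / p.1 ^ 2)

noncomputable def Kset (ℓ u Mb : ℝ) : Set (ℝ × ℝ) := Icc ℓ u ×ˢ Icc (-Mb) Mb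

noncomputable def Lr (α β d ℓ u Mb : ℝ) : ℝ :=
  1 + α/d + α + β/ℓ^2 + 2*β*Mb*u/ℓ^4

lemma Lr_one_le {α β d ℓ u Mb : ℝ} (hα : 0 < α) (hβ : 0 < β) (hd : 0 < d)
    (hℓ : 0 < ℓ) (hu : ℓ ≤ u) (hMb : 0 ≤ Mb) : 1 ≤ Lr α β d ℓ u Mb := by
  have h1 : 0 ≤ α/d := by positivity
  have h2 : 0 ≤ β/ℓ^2 := by positivity
  have hu0 : 0 < u := lt_of_lt_of_le hℓ hu
  have h3 : 0 ≤ 2*β*Mb*u/ℓ^4 := by positivity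
  simp only [Lr]; linarith

lemma Bv_lipschitzOn {α β d v₀ ℓ u Mb : ℝ} (hα : 0 < α) (hβ : 0 < β) (hd : 0 < d)
    (hℓ : 0 < ℓ) (hu : ℓ ≤ u) (hMb : 0 ≤ Mb) :
    ∀ p ∈ Kset ℓ u Mb, ∀ q ∈ Kset ℓ u Mb,
      dist (Bv α β d v₀ p) (Bv α β d v₀ q) ≤ (Lr α β d ℓ u Mb) * dist p q := by
  rintro ⟨a, b⟩ hp ⟨a', b'⟩ hq
  simp only [Kset, Set.mem_prod, Set.mem_Icc] at hp hq
  obtain ⟨⟨ha1, ha2⟩, hb1, hb2⟩ := hp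
  obtain ⟨⟨ha1', ha2'⟩, hb1', hb2'⟩ := hq
  set L := Lr α β d ℓ u Mb with hL
  have hL1 : 1 ≤ L := Lr_one_le hα hβ hd hℓ hu hMb
  have ha0 : 0 < a := lt_of_lt_of_le hℓ ha1
  have ha0' : 0 < a' := lt_of_lt_of_le hℓ ha1'
  set D := dist ((a,b) : ℝ × ℝ) ((a',b') : ℝ × ℝ) with hD
  have hDa : |a - a'| ≤ D := by
    rw [hD, Prod.dist_eq]; exact le_max_of_le_left (by simp [Real.dist_eq])
  have hDb : |b - b'| ≤ D := by
    rw [hD, Prod.dist_eq]; exact le_max_of_le_right (by simp [Real.dist_eq])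
  have hD0 : 0 ≤ D := dist_nonneg
  clear_value D
  rw [show Bv α β d v₀ (a,b) = (b, -α * (V (a / d) - v₀ + b) - β * b / a ^ 2) from rfl,
    show Bv α β d v₀ (a',b') = (b', -α * (V (a' / d) - v₀ + b') - β * b' / a' ^ 2) from rfl,
    Prod.dist_eq]
  apply max_le
  · simp only [Real.dist_eq]
    calc |b - b'| ≤ D := hDb
    _ ≤ L * D := le_mul_of_one_le_left hD0 hL1
  · simp only [Real.dist_eq]
    have htanh : |Real.tanh (a/d - 2) - Real.tanh (a'/d - 2)| ≤ D/d := by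
      have h1 := tanh_dist (a/d - 2) (a'/d - 2)
      have he : a/d - 2 - (a'/d - 2) = (a - a')/d := by ring
      rw [he, abs_div, abs_of_pos hd] at h1
      exact h1.trans (by gcongr)
    have hfrac : |b/a^2 - b'/a'^2| ≤ D/ℓ^2 + 2*Mb*u*D/ℓ^4 := by
      have he : b/a^2 - b'/a'^2 = (b - b')/a^2 + b'*((a' - a)*(a' + a))/(a^2*a'^2) := by
        field_simp; ring
      rw [he]
      refine (abs_add_le _ _).trans ?_
      have h1 : |(b - b')/a^2| ≤ D/ℓ^2 := by
        rw [abs_div, abs_of_pos (by positivity : (0:ℝ) < a^2)]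
        have : ℓ^2 ≤ a^2 := by nlinarith
        calc |b - b'|/a^2 ≤ |b - b'|/ℓ^2 := by gcongr
        _ ≤ D/ℓ^2 := by gcongr
      have h2 : |b'*((a' - a)*(a' + a))/(a^2*a'^2)| ≤ 2*Mb*u*D/ℓ^4 := by
        rw [abs_div, abs_of_pos (by positivity : (0:ℝ) < a^2*a'^2), abs_mul, abs_mul]
        have hb' : |b'| ≤ Mb := abs_le.2 ⟨hb1', hb2'⟩
        have haa : |a' + a| ≤ 2*u := by
          rw [abs_of_pos (by linarith)]; linarith
        have haa' : |a' - a| ≤ D := (abs_sub_comm a' a) ▸ hDa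
        have hq1 : ℓ^2 ≤ a^2 := by nlinarith
        have hq2 : ℓ^2 ≤ a'^2 := by nlinarith
        have hden : ℓ^4 ≤ a^2*a'^2 := by
          nlinarith [mul_le_mul hq1 hq2 (by positivity : (0:ℝ) ≤ ℓ^2)
            (by positivity : (0:ℝ) ≤ a^2)]
        calc |b'| * (|a' - a| * |a' + a|) / (a^2*a'^2)
            ≤ |b'| * (|a' - a| * |a' + a|) / ℓ^4 := by gcongr
          _ ≤ Mb * (D * (2*u)) / ℓ^4 := by
              gcongr
          _ = 2*Mb*u*D/ℓ^4 := by ring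
      linarith
    have he2 : -α * (V (a/d) - v₀ + b) - β * b / a ^ 2 -
        (-α * (V (a'/d) - v₀ + b') - β * b' / a' ^ 2)
        = (-α) * (Real.tanh (a/d - 2) - Real.tanh (a'/d - 2)) + (-α) * (b - b')
          + (-β) * (b/a^2 - b'/a'^2) := by
      simp only [V]; ring
    rw [he2]
    have habs : |(-α) * (Real.tanh (a/d - 2) - Real.tanh (a'/d - 2)) + (-α) * (b - b')
        + (-β) * (b/a^2 - b'/a'^2)|
        ≤ α * |Real.tanh (a/d - 2) - Real.tanh (a'/d - 2)| + α * |b - b'|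
          + β * |b/a^2 - b'/a'^2| := by
      refine (abs_add_le _ _).trans (add_le_add ((abs_add_le _ _).trans (add_le_add ?_ ?_)) ?_) <;>
        rw [abs_mul, abs_neg, abs_of_pos (by assumption)]
    refine habs.trans ?_
    have step : α * |Real.tanh (a/d - 2) - Real.tanh (a'/d - 2)| + α * |b - b'|
          + β * |b/a^2 - b'/a'^2|
        ≤ α * (D/d) + α * D + β * (D/ℓ^2 + 2*Mb*u*D/ℓ^4) := by
      gcongr
    refine step.trans ?_
    have hkey : L * D - (α * (D/d) + α * D + β * (D/ℓ^2 + 2*Mb*u*D/ℓ^4)) = D := by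
      rw [hL, Lr]; field_simp; ring
    linarith

noncomputable def Cr (α β v₀ ℓ Mb : ℝ) : ℝ := Mb + α*(2 + v₀ + Mb) + β*Mb/ℓ^2

lemma Cr_pos {α β v₀ ℓ Mb : ℝ} (hα : 0 < α) (hβ : 0 < β) (hv : 0 < v₀)
    (hℓ : 0 < ℓ) (hMb : 1 ≤ Mb) : 0 < Cr α β v₀ ℓ Mb := by
  have : 0 ≤ β*Mb/ℓ^2 := by positivity
  simp only [Cr]; nlinarith

lemma Bv_norm_le {α β d v₀ ℓ u Mb : ℝ} (hα : 0 < α) (hβ : 0 < β) (hd : 0 < d)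
    (hℓ : 0 < ℓ) (hv : 0 < v₀) (hMb : 0 ≤ Mb) :
    ∀ p ∈ Kset ℓ u Mb, ‖Bv α β d v₀ p‖ ≤ Cr α β v₀ ℓ Mb := by
  rintro ⟨a, b⟩ hp
  simp only [Kset, Set.mem_prod, Set.mem_Icc] at hp
  obtain ⟨⟨ha1, ha2⟩, hb1, hb2⟩ := hp
  have ha0 : 0 < a := lt_of_lt_of_le hℓ ha1
  have hb' : |b| ≤ Mb := abs_le.2 ⟨hb1, hb2⟩
  rw [show Bv α β d v₀ (a,b) = (b, -α * (V (a / d) - v₀ + b) - β * b / a ^ 2) from rfl,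
    Prod.norm_def]
  have hfq : 0 ≤ β*Mb/ℓ^2 := by positivity
  apply max_le
  · simp only [Real.norm_eq_abs]
    simp only [Cr]; nlinarith
  · simp only [Real.norm_eq_abs]
    have hV : |V (a/d)| ≤ 2 := by
      simp only [V]
      refine (abs_sub _ _).trans ?_
      have := abs_tanh_le_one (a/d - 2)
      have := abs_tanh_le_one (-2 : ℝ)
      linarith
    have h1 : |(-α) * (V (a/d) - v₀ + b)| ≤ α * (2 + v₀ + Mb) := by
      rw [abs_mul, abs_neg, abs_of_pos hα]
      apply mul_le_mul_of_nonneg_left _ hα.le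
      refine (abs_add_le _ _).trans ?_
      have h3 : |V (a/d) - v₀| ≤ 2 + v₀ := by
        refine (abs_sub _ _).trans ?_
        rw [abs_of_pos hv]; linarith
      linarith
    have h2 : |β * b / a^2| ≤ β*Mb/ℓ^2 := by
      rw [abs_div, abs_of_pos (by positivity : (0:ℝ) < a^2), abs_mul, abs_of_pos hβ]
      have hden : ℓ^2 ≤ a^2 := by nlinarith
      calc β * |b| / a^2 ≤ β * Mb / a^2 := by gcongr
      _ ≤ β * Mb / ℓ^2 := by gcongr
    calc |(-α) * (V (a/d) - v₀ + b) - β * b / a^2|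
        ≤ |(-α) * (V (a/d) - v₀ + b)| + |β * b / a^2| := abs_sub _ _
      _ ≤ α * (2 + v₀ + Mb) + β*Mb/ℓ^2 := add_le_add h1 h2
      _ ≤ Cr α β v₀ ℓ Mb := by simp only [Cr]; linarith
noncomputable def clampR (l u a : ℝ) : ℝ := max l (min a u)

lemma clampR_dist (l u a b : ℝ) : |clampR l u a - clampR l u b| ≤ |a - b| := by
  have h1 : |clampR l u a - clampR l u b| ≤ |min a u - min b u| := by
    rw [clampR, clampR, max_comm l, max_comm l]
    exact abs_max_sub_max_le_abs _ _ _
  refine h1.trans ((abs_min_sub_min_le_max a u b u).trans (by simp))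

lemma clampR_mem {l u : ℝ} (h : l ≤ u) (a : ℝ) : clampR l u a ∈ Icc l u :=
  ⟨le_max_left _ _, max_le (by exact h) (min_le_right _ _)⟩

lemma clampR_eq {l u a : ℝ} (h : a ∈ Icc l u) : clampR l u a = a := by
  rw [clampR, min_eq_left h.2, max_eq_right h.1]

noncomputable def clampP (ℓ u Mb : ℝ) : ℝ × ℝ → ℝ × ℝ :=
  fun p => (clampR ℓ u p.1, clampR (-Mb) Mb p.2)

lemma clampP_mem {ℓ u Mb : ℝ} (h1 : ℓ ≤ u) (h2 : 0 ≤ Mb) (p : ℝ × ℝ) :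
    clampP ℓ u Mb p ∈ Kset ℓ u Mb :=
  ⟨clampR_mem h1 _, clampR_mem (by linarith) _⟩

lemma clampP_eq {ℓ u Mb : ℝ} {p : ℝ × ℝ} (h : p ∈ Kset ℓ u Mb) : clampP ℓ u Mb p = p := by
  obtain ⟨h1, h2⟩ := h
  rw [clampP, clampR_eq h1, clampR_eq h2]

lemma clampP_dist (ℓ u Mb : ℝ) (p q : ℝ × ℝ) :
    dist (clampP ℓ u Mb p) (clampP ℓ u Mb q) ≤ dist p q := by
  rw [Prod.dist_eq, Prod.dist_eq]
  exact max_le_max (by simpa [Real.dist_eq, clampP] using clampR_dist ℓ u p.1 q.1)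
    (by simpa [Real.dist_eq, clampP] using clampR_dist (-Mb) Mb p.2 q.2)

noncomputable def Gv (α β d v₀ ℓ u Mb : ℝ) : ℝ × ℝ → ℝ × ℝ :=
  fun p => Bv α β d v₀ (clampP ℓ u Mb p)

lemma Gv_eq {α β d v₀ ℓ u Mb : ℝ} {p : ℝ × ℝ} (h : p ∈ Kset ℓ u Mb) :
    Gv α β d v₀ ℓ u Mb p = Bv α β d v₀ p := by rw [Gv, clampP_eq h]

lemma Gv_lipschitz {α β d v₀ ℓ u Mb : ℝ} (hα : 0 < α) (hβ : 0 < β) (hd : 0 < d)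
    (hℓ : 0 < ℓ) (hu : ℓ ≤ u) (hMb : 0 ≤ Mb) :
    LipschitzWith (Real.toNNReal (Lr α β d ℓ u Mb)) (Gv α β d v₀ ℓ u Mb) := by
  apply LipschitzWith.of_dist_le_mul
  intro p q
  have h1 := Bv_lipschitzOn (v₀ := v₀) hα hβ hd hℓ hu hMb _ (clampP_mem hu hMb p) _
    (clampP_mem hu hMb q)
  have h2 := clampP_dist ℓ u Mb p q
  have hL0 : (0:ℝ) ≤ Lr α β d ℓ u Mb := by linarith [Lr_one_le hα hβ hd hℓ hu hMb]
  rw [Real.coe_toNNReal _ hL0]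
  calc dist (Gv α β d v₀ ℓ u Mb p) (Gv α β d v₀ ℓ u Mb q)
      ≤ Lr α β d ℓ u Mb * dist (clampP ℓ u Mb p) (clampP ℓ u Mb q) := h1
    _ ≤ Lr α β d ℓ u Mb * dist p q := by gcongr

lemma Gv_norm_le {α β d v₀ ℓ u Mb : ℝ} (hα : 0 < α) (hβ : 0 < β) (hd : 0 < d)
    (hℓ : 0 < ℓ) (hu : ℓ ≤ u) (hv : 0 < v₀) (hMb : 0 ≤ Mb) (p : ℝ × ℝ) :
    ‖Gv α β d v₀ ℓ u Mb p‖ ≤ Cr α β v₀ ℓ Mb :=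
  Bv_norm_le hα hβ hd hℓ hv hMb _ (clampP_mem hu hMb p)

/-- Existence of a local solution of `ż = Gv z`, together with the a priori bound. -/
lemma exists_ext {α β d v₀ ℓ u Mb : ℝ} (hα : 0 < α) (hβ : 0 < β) (hd : 0 < d)
    (hℓ : 0 < ℓ) (hu : ℓ ≤ u) (hv : 0 < v₀) (hMb : 0 ≤ Mb)
    (p₀ : ℝ × ℝ) (t₀ h : ℝ) (hh : 0 ≤ h) :
    ∃ f : ℝ → ℝ × ℝ, f t₀ = p₀ ∧
      (∀ t ∈ Icc t₀ (t₀+h), HasDerivWithinAt f (Gv α β d v₀ ℓ u Mb (f t)) (Icc t₀ (t₀+h)) t) ∧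
      (∀ t ∈ Icc t₀ (t₀+h), ‖f t - p₀‖ ≤ Cr α β v₀ ℓ Mb * h) := by
  have hCr0 : 0 ≤ Cr α β v₀ ℓ Mb := by
    have := Gv_norm_le (α := α) (β := β) (d := d) (v₀ := v₀) (ℓ := ℓ) (u := u) (Mb := Mb)
      hα hβ hd hℓ hu hv hMb (0, 0)
    exact (norm_nonneg _).trans this
  have hpl : IsPicardLindelof (fun _ : ℝ => Gv α β d v₀ ℓ u Mb) (tmin := t₀) (tmax := t₀+h)
      ⟨t₀, le_rfl, by linarith⟩ p₀ (Real.toNNReal (Cr α β v₀ ℓ Mb * h)) 0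
      (Real.toNNReal (Cr α β v₀ ℓ Mb)) (Real.toNNReal (Lr α β d ℓ u Mb)) := by
    constructor
    · exact fun t _ => ((Gv_lipschitz (v₀ := v₀) hα hβ hd hℓ hu hMb).lipschitzOnWith)
    · exact fun p _ => continuousOn_const
    · intro t _ p _
      rw [Real.coe_toNNReal _ hCr0]
      exact Gv_norm_le hα hβ hd hℓ hu hv hMb p
    · simp only [NNReal.coe_zero, sub_zero, Real.coe_toNNReal _ hCr0,
        Real.coe_toNNReal _ (mul_nonneg hCr0 hh)]
      rw [show t₀ + h - t₀ = h by ring, sub_self, max_eq_left hh]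
  obtain ⟨f, hf0, hf⟩ := hpl.exists_eq_forall_mem_Icc_hasDerivWithinAt₀
  replace hf0 : f t₀ = p₀ := hf0
  refine ⟨f, hf0, hf, ?_⟩
  intro t ht
  have := Convex.norm_image_sub_le_of_norm_hasDerivWithin_le
    (f := f) (f' := fun t => Gv α β d v₀ ℓ u Mb (f t)) (C := Cr α β v₀ ℓ Mb)
    (s := Icc t₀ (t₀+h)) hf (fun s _ => Gv_norm_le hα hβ hd hℓ hu hv hMb (f s))
    (convex_Icc _ _) (left_mem_Icc.2 (by linarith)) ht
  rw [hf0] at this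
  refine this.trans ?_
  have : ‖t - t₀‖ ≤ h := by
    rw [Real.norm_eq_abs, abs_of_nonneg (by linarith [ht.1])]
    linarith [ht.2]
  gcongr

end AuxVSI

/-- with `𝒯 < ∞`, `x₋ = min{x∘, x_∞}` and
`ť = sup{ t < 𝒯 : x_t ≥ x₋ / 2 }`, the derivative of `t ↦ y_t` is strictly positive on
`(ť, 𝒯)`; in particular `y` is strictly increasing there. -/
theorem velocity_strictly_increasing (α β d v₀ : ℝ)
    (hα : 0 < α) (hβ : 0 < β) (hd : 0 < d)
    (hv₀ : v₀ ∈ Set.Ioo 0 (1 + Real.tanh 2))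
    (x y : ℝ → ℝ) (T : ℝ) (hT : 0 < T)
    (x₀ y₀ : ℝ) (hx₀ : 0 < x₀) (hinit : x 0 = x₀ ∧ y 0 = y₀)
    (hsol : IsSol α β d v₀ x y (T : EReal))
    (hmax : IsMaximal α β d v₀ x y (T : EReal))
    (xm : ℝ) (hxm : xm = min x₀ (xInf d v₀))
    (tc : ℝ) (htc : tc = sSup {t : ℝ | 0 ≤ t ∧ t < T ∧ xm / 2 ≤ x t}) :
    (∀ t : ℝ, tc < t → t < T → 0 < deriv y t) ∧
    StrictMonoOn y (Set.Ioo tc T) := by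

  obtain ⟨hv1, hv2⟩ := hv₀
  obtain ⟨hx0, hy0⟩ := hinit
  -- basic facts about the equilibrium
  set w : ℝ := v₀ + Real.tanh (-2) with hwdef
  have htanh2 : Real.tanh (-2 : ℝ) = -Real.tanh 2 := by rw [Real.tanh_neg]
  have hw1 : -1 < w := by
    rw [hwdef, htanh2]; have := tanh_lt_one' 2; linarith
  have hw2 : w < 1 := by
    rw [hwdef, htanh2]; have := _root_.neg_one_lt_tanh 2; linarith
  have hwt : Real.tanh (_root_.artanh w) = w := tanh_artanh' hw1 hw2
  have hartanh : -2 < _root_.artanh w := by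
    have h1 : Real.tanh (-2) < Real.tanh (_root_.artanh w) := by
      rw [hwt, hwdef]; linarith
    exact tanh_strictMono.lt_iff_lt.mp h1
  have hxInf : 0 < xInf d v₀ := by
    rw [xInf]
    have h2 : (0:ℝ) < 2 + _root_.artanh w := by linarith
    positivity
  have hxm0 : 0 < xm := by rw [hxm]; exact lt_min hx₀ hxInf
  have hxmInf : xm ≤ xInf d v₀ := hxm ▸ min_le_right _ _
  have hVlt : ∀ a : ℝ, a < xInf d v₀ → V (a / d) < v₀ := by
    intro a ha
    have h1 : a / d - 2 < _root_.artanh w := by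
      rw [xInf] at ha
      have : a / d < 2 + _root_.artanh w := by
        rw [div_lt_iff₀ hd]; linarith [ha, mul_comm d (2 + _root_.artanh w)]
      linarith
    have h2 : Real.tanh (a/d - 2) < Real.tanh (_root_.artanh w) := tanh_strictMono h1
    rw [hwt, hwdef] at h2
    rw [V]; linarith
  have hVpos : ∀ a : ℝ, 0 < a → 0 < V (a / d) := by
    intro a ha
    have h0 : (0:ℝ) < a / d := div_pos ha hd
    have h1 : (-2:ℝ) < a / d - 2 := by linarith
    have := tanh_strictMono h1
    rw [V]; linarith
  -- the sup-defining set
  have hbdd : BddAbove {t : ℝ | 0 ≤ t ∧ t < T ∧ xm / 2 ≤ x t} :=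
    ⟨T, fun t ht => ht.2.1.le⟩
  have h0S : (0:ℝ) ∈ {t : ℝ | 0 ≤ t ∧ t < T ∧ xm / 2 ≤ x t} := by
    refine ⟨le_rfl, hT, ?_⟩
    rw [hx0]
    have : xm ≤ x₀ := hxm ▸ min_le_left _ _
    linarith
  have htc0 : 0 ≤ tc := htc ▸ le_csSup hbdd h0S
  have hxlt : ∀ t, tc < t → t < T → x t < xm / 2 := by
    intro t h1 h2
    by_contra hc
    push_neg at hc
    have hmem : t ∈ {t : ℝ | 0 ≤ t ∧ t < T ∧ xm / 2 ≤ x t} := ⟨by linarith, h2, hc⟩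
    have := htc ▸ le_csSup hbdd hmem
    linarith
  -- solution components
  have hco : ∀ s : ℝ, s < T → (s : EReal) < (T : EReal) := fun s hs => EReal.coe_lt_coe_iff.2 hs
  have hx_pos : ∀ t, 0 ≤ t → t < T → 0 < x t := fun t h1 h2 => (hsol t h1 (hco t h2)).1
  have hdx : ∀ t, 0 ≤ t → t < T → HasDerivAt x (y t) t := fun t h1 h2 =>
    (hsol t h1 (hco t h2)).2.1
  have hdy : ∀ t, 0 ≤ t → t < T →
      HasDerivAt y (-α * (V (x t / d) - v₀ + y t) - β * y t / (x t) ^ 2) t := fun t h1 h2 =>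
    (hsol t h1 (hco t h2)).2.2
  -- positivity of the derivative of y whenever y ≤ 0 and tc < t < T
  have hderiv_pos : ∀ t, tc < t → t < T → y t ≤ 0 →
      0 < -α * (V (x t / d) - v₀ + y t) - β * y t / (x t) ^ 2 := by
    intro t h1 h2 hy
    have hxp : 0 < x t := hx_pos t (by linarith) h2
    have hxm2 : x t < xm / 2 := hxlt t h1 h2
    have hV : V (x t / d) < v₀ := hVlt _ (by linarith)
    have h3 : β * y t / (x t) ^ 2 ≤ 0 :=
      div_nonpos_iff.2 (Or.inr ⟨by nlinarith, by positivity⟩)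
    have h4 : 0 < -α * (V (x t / d) - v₀ + y t) := by nlinarith
    linarith
  -- MAIN CLAIM: y ≤ 0 on (tc, T)
  have hynonpos : ∀ t, tc < t → t < T → y t ≤ 0 := by
    intro t₁ htc1 ht1T
    by_contra hcon
    push_neg at hcon
    -- Step A : y ≥ 0 on [t₁, T)
    have hyge : ∀ t, t₁ ≤ t → t < T → 0 ≤ y t := by
      intro t₂ ht21 ht2T
      by_contra hneg
      push_neg at hneg
      have ht12 : t₁ < t₂ :=
        lt_of_le_of_ne ht21 (fun h => by rw [← h] at hneg; linarith)
      set A := Icc t₁ t₂ ∩ y ⁻¹' (Ici 0) with hA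
      have hA1 : t₁ ∈ A := ⟨⟨le_rfl, ht12.le⟩, hcon.le⟩
      have hAb : BddAbove A := ⟨t₂, fun s hs => hs.1.2⟩
      have hAne : A.Nonempty := ⟨t₁, hA1⟩
      have hycont : ContinuousOn y (Icc t₁ t₂) := fun s hs =>
        (hdy s (by linarith [hs.1]) (lt_of_le_of_lt hs.2 ht2T)).continuousAt.continuousWithinAt
      have hAclosed : IsClosed A :=
        hycont.preimage_isClosed_of_isClosed isClosed_Icc isClosed_Ici
      set s₀ := sSup A with hs₀def
      have hs₀A : s₀ ∈ A := hAclosed.csSup_mem hAne hAb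
      have hs₀1 : t₁ ≤ s₀ := hs₀A.1.1
      have hs₀2 : s₀ ≤ t₂ := hs₀A.1.2
      have hs₀T : s₀ < T := lt_of_le_of_lt hs₀2 ht2T
      have hs₀0 : 0 ≤ s₀ := by linarith
      have hlt : ∀ s', s₀ < s' → s' ≤ t₂ → y s' < 0 := by
        intro s' h1 h2
        by_contra hc
        push_neg at hc
        have hmem : s' ∈ A := ⟨⟨by linarith, h2⟩, hc⟩
        have := le_csSup hAb hmem
        linarith
      have hs₀t₂ : s₀ < t₂ :=
        lt_of_le_of_ne hs₀2 (fun h => by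
          have := hs₀A.2
          rw [h] at this
          exact absurd this (not_le.2 hneg))
      have hy₀le : y s₀ ≤ 0 := by
        have hct : ContinuousAt y s₀ := (hdy s₀ hs₀0 hs₀T).continuousAt
        have htend : Tendsto y (𝓝[>] s₀) (𝓝 (y s₀)) :=
          (hct.tendsto).mono_left nhdsWithin_le_nhds
        refine le_of_tendsto htend ?_
        filter_upwards [Ioo_mem_nhdsGT_of_mem ⟨le_refl s₀, hs₀t₂⟩] with s' hs'
        exact (hlt s' hs'.1 hs'.2.le).le
      have hy₀ : y s₀ = 0 := le_antisymm hy₀le hs₀A.2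
      have hder := hdy s₀ hs₀0 hs₀T
      have hcpos : 0 < -α * (V (x s₀ / d) - v₀ + y s₀) - β * y s₀ / (x s₀) ^ 2 :=
        hderiv_pos s₀ (by linarith) hs₀T hy₀le
      have hslope := hasDerivAt_iff_tendsto_slope.1 hder
      have h2 : Tendsto (slope y s₀) (𝓝[>] s₀)
          (𝓝 (-α * (V (x s₀ / d) - v₀ + y s₀) - β * y s₀ / (x s₀) ^ 2)) :=
        hslope.mono_left (nhdsWithin_mono _ (fun u hu =>
          mem_compl_singleton_iff.mpr (ne_of_gt hu)))
      have hev : ∀ᶠ u in 𝓝[>] s₀, 0 < slope y s₀ u := h2.eventually (lt_mem_nhds hcpos)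
      have hev2 : ∀ᶠ u in 𝓝[>] s₀, u ∈ Ioc s₀ t₂ :=
        Ioc_mem_nhdsGT_of_mem ⟨le_refl s₀, hs₀t₂⟩
      obtain ⟨u, hu1, hu2⟩ := (hev.and hev2).exists
      have hsl : slope y s₀ u = y u / (u - s₀) := by
        rw [slope_def_field, hy₀, sub_zero]
      rw [hsl] at hu1
      have hupos : 0 < u - s₀ := sub_pos.2 hu2.1
      have hyu : 0 < y u := by
        rcases div_pos_iff.1 hu1 with ⟨h1, _⟩ | ⟨_, h2⟩
        · exact h1
        · linarith
      exact absurd (hlt u hu2.1 hu2.2) (not_lt.2 hyu.le)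
    -- Step B : x is monotone on [t₁, T)
    have hxmono : ∀ t, t₁ ≤ t → t < T → x t₁ ≤ x t := by
      intro t ht1 htT
      rcases eq_or_lt_of_le ht1 with h | h
      · rw [← h]
      · have hmono : MonotoneOn x (Icc t₁ t) := by
          apply monotoneOn_of_deriv_nonneg (convex_Icc t₁ t)
          · intro s hs
            exact (hdx s (by linarith [hs.1]) (lt_of_le_of_lt hs.2 htT)).continuousAt.continuousWithinAt
          · intro s hs
            rw [interior_Icc] at hs
            exact (hdx s (by linarith [hs.1.le]) (by linarith [hs.2])).differentiableAt.differentiableWithinAt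
          · intro s hs
            rw [interior_Icc] at hs
            rw [(hdx s (by linarith [hs.1.le]) (by linarith [hs.2])).deriv]
            exact hyge s hs.1.le (by linarith [hs.2])
        exact hmono (left_mem_Icc.2 h.le) (right_mem_Icc.2 h.le) h.le
    -- Step C : y is bounded above on [t₁, T)
    set Mc : ℝ := y t₁ + α * v₀ * T with hMcdef
    have hMc0 : 0 < Mc := by
      have : 0 ≤ α * v₀ * T := by positivity
      rw [hMcdef]; linarith
    have hyle : ∀ t, t₁ ≤ t → t < T → y t ≤ Mc := by
      intro t ht1 htT
      rcases eq_or_lt_of_le ht1 with h | h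
      · have h6 : 0 ≤ α * v₀ * T := by positivity
        rw [← h, hMcdef]; linarith
      · have hanti : AntitoneOn (fun s => y s - α * v₀ * s) (Icc t₁ t) := by
          apply antitoneOn_of_deriv_nonpos (convex_Icc t₁ t)
          · intro s hs
            apply ContinuousAt.continuousWithinAt
            exact ((hdy s (by linarith [hs.1]) (lt_of_le_of_lt hs.2 htT)).continuousAt.sub
              ((continuous_const.mul continuous_id).continuousAt))
          · intro s hs
            rw [interior_Icc] at hs
            have h1 : HasDerivAt (fun s => y s - α * v₀ * s)
                ((-α * (V (x s / d) - v₀ + y s) - β * y s / (x s) ^ 2) - α * v₀) s := by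
              have h2 : HasDerivAt (fun s : ℝ => α * v₀ * s) (α * v₀) s := by
                simpa using (hasDerivAt_id s).const_mul (α * v₀)
              exact ((hdy s (by linarith [hs.1.le]) (by linarith [hs.2]))).sub h2
            exact h1.differentiableAt.differentiableWithinAt
          · intro s hs
            rw [interior_Icc] at hs
            have hs0 : (0:ℝ) ≤ s := by linarith [hs.1.le]
            have hsT : s < T := by linarith [hs.2]
            have h2 : HasDerivAt (fun s : ℝ => α * v₀ * s) (α * v₀) s := by
              simpa using (hasDerivAt_id s).const_mul (α * v₀)
            have h1 : HasDerivAt (fun s => y s - α * v₀ * s)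
                ((-α * (V (x s / d) - v₀ + y s) - β * y s / (x s) ^ 2) - α * v₀) s :=
              (hdy s hs0 hsT).sub h2
            rw [h1.deriv]
            have hxp : 0 < x s := hx_pos s hs0 hsT
            have hVp : 0 < V (x s / d) := hVpos _ hxp
            have hyp : 0 ≤ y s := hyge s hs.1.le hsT
            have h3 : 0 ≤ β * y s / (x s) ^ 2 := by positivity
            nlinarith [mul_nonneg hα.le hVp.le, mul_nonneg hα.le hyp]
        have h4 := hanti (left_mem_Icc.2 h.le) (right_mem_Icc.2 h.le) h.le
        simp only at h4
        have h5 : α * v₀ * t - α * v₀ * t₁ ≤ α * v₀ * T := by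
          have h6 : t - t₁ ≤ T := by linarith
          have h7 := mul_le_mul_of_nonneg_left h6 (by positivity : (0:ℝ) ≤ α * v₀)
          linarith [h7]
        rw [hMcdef]; linarith
    -- Setup for the extension argument
    have ht₁0 : 0 < t₁ := lt_of_le_of_lt htc0 htc1
    set δ : ℝ := x t₁ with hδdef
    have hδ0 : 0 < δ := hx_pos t₁ ht₁0.le ht1T
    have hδxm : δ < xm / 2 := hxlt t₁ htc1 ht1T
    set ℓ : ℝ := δ / 2 with hℓdef
    set u : ℝ := xm with hudef
    set Mb : ℝ := Mc + 1 with hMbdef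
    have hℓ0 : 0 < ℓ := by rw [hℓdef]; linarith
    have hℓu : ℓ ≤ u := by rw [hℓdef, hudef]; linarith
    have hMb0 : 0 ≤ Mb := by rw [hMbdef]; linarith
    have hMb1 : 1 ≤ Mb := by rw [hMbdef]; linarith
    -- margin
    set ρ : ℝ := min (δ / 2) (min (xm / 2) 1) with hρdef
    have hρ0 : 0 < ρ := by
      rw [hρdef]
      exact lt_min (by linarith) (lt_min (by linarith) one_pos)
    have hρδ : ρ ≤ δ / 2 := hρdef ▸ min_le_left _ _
    have hρxm : ρ ≤ xm / 2 := hρdef ▸ (min_le_right _ _).trans (min_le_left _ _)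
    have hρ1 : ρ ≤ 1 := hρdef ▸ (min_le_right _ _).trans (min_le_right _ _)
    set Cq : ℝ := Cr α β v₀ ℓ Mb with hCqdef
    have hCq0 : 0 < Cq := Cr_pos hα hβ hv1 hℓ0 hMb1
    set h : ℝ := ρ / (2 * Cq) with hhdef
    have hh0 : 0 < h := by rw [hhdef]; positivity
    have hChρ : Cq * h = ρ / 2 := by
      rw [hhdef]; field_simp
    set t₀ : ℝ := max t₁ (T - h / 2) with ht₀def
    have ht₀1 : t₁ ≤ t₀ := le_max_left _ _
    have ht₀T : t₀ < T := by
      rw [ht₀def]; exact max_lt ht1T (by linarith)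
    have hTt₀h : T < t₀ + h := by
      have : T - h / 2 ≤ t₀ := le_max_right _ _
      linarith
    have ht₀0 : 0 < t₀ := lt_of_lt_of_le ht₁0 ht₀1
    -- trajectory stays in K
    have htraj : ∀ t, t₁ ≤ t → t < T →
        δ ≤ x t ∧ x t < xm / 2 ∧ 0 ≤ y t ∧ y t ≤ Mc := fun t h1 h2 =>
      ⟨hxmono t h1 h2, hxlt t (by linarith) h2, hyge t h1 h2, hyle t h1 h2⟩
    have htrajK : ∀ t, t₁ ≤ t → t < T → ((x t, y t) : ℝ × ℝ) ∈ Kset ℓ u Mb := by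
      intro t h1 h2
      obtain ⟨k1, k2, k3, k4⟩ := htraj t h1 h2
      refine ⟨⟨?_, ?_⟩, ?_, ?_⟩ <;> simp only [hℓdef, hudef, hMbdef] <;> linarith
    -- the extension
    obtain ⟨f, hf0, hfd, hfb⟩ := exists_ext hα hβ hd hℓ0 hℓu hv1 hMb0 (x t₀, y t₀) t₀ h hh0.le
    obtain ⟨k1, k2, k3, k4⟩ := htraj t₀ ht₀1 ht₀T
    have hfK : ∀ t, t ∈ Icc t₀ (t₀ + h) → f t ∈ Kset ℓ u Mb ∧ ℓ ≤ (f t).1 := by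
      intro t ht
      have hb := (hfb t ht).trans_eq hChρ
      have hb1 : |(f t).1 - x t₀| ≤ ρ / 2 := by
        have h1 := norm_fst_le (f t - (x t₀, y t₀))
        rw [Prod.fst_sub] at h1
        simp only [Real.norm_eq_abs] at h1
        exact h1.trans hb
      have hb2 : |(f t).2 - y t₀| ≤ ρ / 2 := by
        have h1 := norm_snd_le (f t - (x t₀, y t₀))
        rw [Prod.snd_sub] at h1
        simp only [Real.norm_eq_abs] at h1
        exact h1.trans hb
      rw [abs_le] at hb1 hb2
      have hm : f t ∈ Kset ℓ u Mb := by
        refine ⟨⟨?_, ?_⟩, ?_, ?_⟩ <;> simp only [hℓdef, hudef, hMbdef] <;> linarith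
      exact ⟨hm, hm.1.1⟩
    -- uniqueness : f agrees with the old solution on [t₀, T)
    have hThle : T ≤ t₀ + h := hTt₀h.le
    have hEq : ∀ τ, t₀ ≤ τ → τ < T → f τ = (x τ, y τ) := by
      intro τ hτ0 hτT
      rcases eq_or_lt_of_le hτ0 with hh1 | hh1
      · rw [← hh1, hf0]
      · have huniq : EqOn (fun s => ((x s, y s) : ℝ × ℝ)) f (Icc t₀ τ) := by
          apply ODE_solution_unique (v := fun _ : ℝ => Gv α β d v₀ ℓ u Mb)
            (K := Real.toNNReal (Lr α β d ℓ u Mb))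
          · exact fun _ => Gv_lipschitz hα hβ hd hℓ0 hℓu hMb0
          · intro s hs
            have hs0 : (0:ℝ) ≤ s := by linarith [hs.1]
            have hsT : s < T := lt_of_le_of_lt hs.2 hτT
            exact ((hdx s hs0 hsT).continuousAt.prodMk
              (hdy s hs0 hsT).continuousAt).continuousWithinAt
          · intro s hs
            have hs0 : (0:ℝ) ≤ s := by linarith [hs.1]
            have hsT : s < T := lt_of_lt_of_le hs.2 hτT.le
            have hder : HasDerivAt (fun s => ((x s, y s) : ℝ × ℝ))
                (y s, -α * (V (x s / d) - v₀ + y s) - β * y s / (x s) ^ 2) s :=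
              (hdx s hs0 hsT).prodMk (hdy s hs0 hsT)
            have hGB : Gv α β d v₀ ℓ u Mb ((x s, y s) : ℝ × ℝ)
                = (y s, -α * (V (x s / d) - v₀ + y s) - β * y s / (x s) ^ 2) := by
              rw [Gv_eq (htrajK s (le_trans ht₀1 hs.1) hsT)]
              rfl
            rw [hGB]
            exact hder.hasDerivWithinAt
          · have hcf : ContinuousOn f (Icc t₀ (t₀ + h)) := fun s hs =>
              (hfd s hs).continuousWithinAt
            exact hcf.mono (Icc_subset_Icc le_rfl (by linarith))
          · intro s hs
            have hsh : s < t₀ + h := by linarith [hs.2]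
            refine (hfd s ⟨hs.1, hsh.le⟩).mono_of_mem_nhdsWithin ?_
            rw [mem_nhdsWithin]
            exact ⟨Iio (t₀ + h), isOpen_Iio, hsh, fun z hz => ⟨le_trans hs.1 hz.2, hz.1.le⟩⟩
          · rw [hf0]
        exact (huniq (right_mem_Icc.2 hτ0) ).symm
    -- glued functions
    set X : ℝ → ℝ := fun t => if t < t₀ then x t else (f t).1 with hXdef
    set Y : ℝ → ℝ := fun t => if t < t₀ then y t else (f t).2 with hYdef
    have hXx : ∀ t, t < T → X t = x t ∧ Y t = y t := by
      intro t htT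
      by_cases hc : t < t₀
      · constructor <;> simp [hXdef, hYdef, if_pos hc]
      · push_neg at hc
        have := hEq t hc htT
        constructor <;> simp [hXdef, hYdef, if_neg (not_lt.2 hc), this]
    have hXf : ∀ t, t₀ ≤ t → X t = (f t).1 ∧ Y t = (f t).2 := by
      intro t hc
      constructor <;> simp [hXdef, hYdef, if_neg (not_lt.2 hc)]
    -- the glued pair is a solution on [0, t₀ + h)
    have hsol' : IsSol α β d v₀ X Y ((t₀ + h : ℝ) : EReal) := by
      intro t ht0 htlt
      have htlt' : t < t₀ + h := EReal.coe_lt_coe_iff.1 htlt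
      by_cases hcase : t < T
      · have hXev : X =ᶠ[𝓝 t] x :=
          eventually_of_mem (Iio_mem_nhds hcase) (fun s hs => (hXx s hs).1)
        have hYev : Y =ᶠ[𝓝 t] y :=
          eventually_of_mem (Iio_mem_nhds hcase) (fun s hs => (hXx s hs).2)
        obtain ⟨hX1, hY1⟩ := hXx t hcase
        refine ⟨?_, ?_, ?_⟩
        · rw [hX1]; exact hx_pos t ht0 hcase
        · rw [hY1]; exact (Filter.EventuallyEq.hasDerivAt_iff hXev).2 (hdx t ht0 hcase)
        · rw [hX1, hY1]
          exact (Filter.EventuallyEq.hasDerivAt_iff hYev).2 (hdy t ht0 hcase)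
      · push_neg at hcase
        have ht₀t : t₀ < t := lt_of_lt_of_le ht₀T hcase
        have htIcc : t ∈ Icc t₀ (t₀ + h) := ⟨ht₀t.le, htlt'.le⟩
        obtain ⟨hK, hK1⟩ := hfK t htIcc
        have hder : HasDerivAt f (Gv α β d v₀ ℓ u Mb (f t)) t :=
          (hfd t htIcc).hasDerivAt (Icc_mem_nhds ht₀t htlt')
        rw [Gv_eq hK] at hder
        have hXev : X =ᶠ[𝓝 t] (fun s => (f s).1) :=
          eventually_of_mem (Ioi_mem_nhds ht₀t) (fun s hs => (hXf s (le_of_lt hs)).1)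
        have hYev : Y =ᶠ[𝓝 t] (fun s => (f s).2) :=
          eventually_of_mem (Ioi_mem_nhds ht₀t) (fun s hs => (hXf s (le_of_lt hs)).2)
        obtain ⟨hX1, hY1⟩ := hXf t ht₀t.le
        have hd1 : HasDerivAt (fun s => (f s).1) ((Bv α β d v₀ (f t)).1) t := by
          have := (ContinuousLinearMap.fst ℝ ℝ ℝ).hasFDerivAt.comp_hasDerivAt t hder
          exact this
        have hd2 : HasDerivAt (fun s => (f s).2) ((Bv α β d v₀ (f t)).2) t := by
          have := (ContinuousLinearMap.snd ℝ ℝ ℝ).hasFDerivAt.comp_hasDerivAt t hder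
          exact this
        refine ⟨?_, ?_, ?_⟩
        · rw [hX1]; linarith
        · rw [hY1]
          have : (Bv α β d v₀ (f t)).1 = (f t).2 := rfl
          rw [this] at hd1
          exact (Filter.EventuallyEq.hasDerivAt_iff hXev).2 hd1
        · rw [hX1, hY1]
          have : (Bv α β d v₀ (f t)).2
              = -α * (V ((f t).1 / d) - v₀ + (f t).2) - β * (f t).2 / ((f t).1) ^ 2 := rfl
          rw [this] at hd2
          exact (Filter.EventuallyEq.hasDerivAt_iff hYev).2 hd2
    -- contradiction with maximality
    refine hmax ((t₀ + h : ℝ) : EReal) X Y (EReal.coe_lt_coe_iff.2 hTt₀h) hsol' ?_ ?_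
    · exact (hXx 0 hT).1
    · exact (hXx 0 hT).2
  -- conclusion
  have hfinal : ∀ t : ℝ, tc < t → t < T → 0 < deriv y t := by
    intro t h1 h2
    rw [(hdy t (by linarith) h2).deriv]
    exact hderiv_pos t h1 h2 (hynonpos t h1 h2)
  refine ⟨hfinal, ?_⟩
  apply strictMonoOn_of_deriv_pos (convex_Ioo tc T)
  · intro s hs
    exact (hdy s (by linarith [hs.1]) hs.2).continuousAt.continuousWithinAt
  · intro s hs
    rw [interior_Ioo] at hs
    exact hfinal s hs.1 hs.2
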